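/- Robustness of the mediation estimating functional under submodel M_a (correct outcome regression and correct mediator density, arbitrary exposure model): if b̂(m,x) = E(Y|E=1,M=m,X=x) and f̂_M(m|e,x) = P(M=m|E=e,X=x) for all m ∈ 𝒮, e ∈ {0,1} and x with P(X=x) > 0, then for every function f̂_E : 𝒳 → (0,1), T(b̂, f̂_M, f̂_E) = θ0. -/

import Mathlib

open MeasureTheory ProbabilityTheory

/-- Conditional probability of `B` given the event `A`: `P(B ∩ A) / P(A)`. -/
noncomputable def cP {Ω : Type*} [MeasurableSpace Ω] (μ : Measure Ω) (B A : Set Ω) : ℝ :=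
  (μ (B ∩ A)).toReal / (μ A).toReal

/-- Conditional expectation of `Y` given the event `A`: `E[Y·1_A] / P(A)`. -/
noncomputable def cE {Ω : Type*} [MeasurableSpace Ω] (μ : Measure Ω) (Y : Ω → ℝ) (A : Set Ω) : ℝ :=
  (∫ ω in A, Y ω ∂μ) / (μ A).toReal

open Classical in
/-- The mediation functional
`θ0 = Σ_{m, x : P(X=x)>0} E(Y | E=1, M=m, X=x) · P(M=m | E=0, X=x) · P(X=x)`. -/
noncomputable def theta0 {Ω 𝒳 𝒮 : Type*} [MeasurableSpace Ω] [Fintype 𝒳] [Fintype 𝒮]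
    (μ : Measure Ω) (X : Ω → 𝒳) (M : Ω → 𝒮) (E : Ω → Bool) (Y : Ω → ℝ) : ℝ :=
  ∑ m : 𝒮, ∑ x ∈ Finset.univ.filter (fun x => μ (X ⁻¹' {x}) ≠ 0),
    cE μ Y (E ⁻¹' {true} ∩ M ⁻¹' {m} ∩ X ⁻¹' {x}) *
      cP μ (M ⁻¹' {m}) (E ⁻¹' {false} ∩ X ⁻¹' {x}) *
      (μ (X ⁻¹' {x})).toReal

section auxLemmas
variable {Ω : Type*} [MeasurableSpace Ω] {μ : Measure Ω}

lemma integral_partition_aux {ι : Type*} [Fintype ι] [MeasurableSpace ι]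
    [MeasurableSingletonClass ι]
    (f : Ω → ι) (hf : Measurable f) (h : Ω → ℝ) (hh : Integrable h μ) :
    ∫ ω, h ω ∂μ = ∑ i : ι, ∫ ω in f ⁻¹' {i}, h ω ∂μ := by
  have hcover : (⋃ i : ι, f ⁻¹' {i}) = Set.univ := by ext ω; simp
  have hdis : Pairwise (Function.onFun Disjoint fun i : ι => f ⁻¹' {i}) := by
    intro i j hij
    simp only [Function.onFun, Set.disjoint_left]
    intro ω hi hj
    exact hij (by simp_all)
  calc ∫ ω, h ω ∂μ = ∫ ω in ⋃ i : ι, f ⁻¹' {i}, h ω ∂μ := by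
        rw [hcover, Measure.restrict_univ]
    _ = ∑' i : ι, ∫ ω in f ⁻¹' {i}, h ω ∂μ :=
        integral_iUnion (fun i => hf (measurableSet_singleton i)) hdis
          (by rw [hcover]; exact hh.integrableOn)
    _ = ∑ i : ι, ∫ ω in f ⁻¹' {i}, h ω ∂μ := tsum_fintype _

lemma sum_toReal_meas_inter_aux {ι : Type*} [Fintype ι] [MeasurableSpace ι]
    [MeasurableSingletonClass ι] [IsFiniteMeasure μ]
    (f : Ω → ι) (hf : Measurable f) (S : Set Ω) :
    ∑ i : ι, (μ (f ⁻¹' {i} ∩ S)).toReal = (μ S).toReal := by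
  rw [← ENNReal.toReal_sum (fun i _ => measure_ne_top μ _)]
  congr 1
  have h1 : ∀ i : ι, μ (f ⁻¹' {i} ∩ S) = (μ.restrict S) (f ⁻¹' {i}) := fun i =>
    (Measure.restrict_apply (hf (measurableSet_singleton i))).symm
  simp_rw [h1]
  rw [sum_measure_preimage_singleton (μ := μ.restrict S) Finset.univ
    (fun y _ => hf (measurableSet_singleton y))]
  simp [Measure.restrict_apply_univ]

end auxLemmas

/-- robustness of the mediation estimating functional under submodel
M_a: if the outcome regression and the mediator density are correct, then for every
exposure working model, `T(b̂, f̂_M, f̂_E) = θ0`. -/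
theorem robust_Ma
    {Ω 𝒳 𝒮 : Type*} [MeasurableSpace Ω] [Fintype 𝒳] [Fintype 𝒮]
    [MeasurableSpace 𝒳] [MeasurableSingletonClass 𝒳]
    [MeasurableSpace 𝒮] [MeasurableSingletonClass 𝒮]
    (μ : Measure Ω) [IsProbabilityMeasure μ]
    (X : Ω → 𝒳) (M : Ω → 𝒮) (E : Ω → Bool) (Y : Ω → ℝ)
    (hX : Measurable X) (hM : Measurable M) (hE : Measurable E)
    (hY : Integrable Y μ)
    (hposE : ∀ (e : Bool) (x : 𝒳), μ (X ⁻¹' {x}) ≠ 0 → μ (E ⁻¹' {e} ∩ X ⁻¹' {x}) ≠ 0)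
    (hposM : ∀ (m : 𝒮) (e : Bool) (x : 𝒳), μ (X ⁻¹' {x}) ≠ 0 →
      μ (M ⁻¹' {m} ∩ E ⁻¹' {e} ∩ X ⁻¹' {x}) ≠ 0)
    -- working models
    (bhat : 𝒮 → 𝒳 → ℝ) (fMhat : 𝒮 → Bool → 𝒳 → ℝ) (fEhat : 𝒳 → ℝ)
    (hfM01 : ∀ m e x, fMhat m e x ∈ Set.Ioo (0:ℝ) 1)
    (hfMsum : ∀ (e : Bool) (x : 𝒳), ∑ m : 𝒮, fMhat m e x = 1)
    (hfE01 : ∀ x, fEhat x ∈ Set.Ioo (0:ℝ) 1)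
    (etahat : 𝒳 → ℝ)
    (hetahat : ∀ x, etahat x = ∑ m : 𝒮, bhat m x * fMhat m false x)
    -- submodel M_a: correct outcome regression and correct mediator density
    (hb : ∀ (m : 𝒮) (x : 𝒳), μ (X ⁻¹' {x}) ≠ 0 →
      bhat m x = cE μ Y (E ⁻¹' {true} ∩ M ⁻¹' {m} ∩ X ⁻¹' {x}))
    (hfM : ∀ (m : 𝒮) (e : Bool) (x : 𝒳), μ (X ⁻¹' {x}) ≠ 0 →
      fMhat m e x = cP μ (M ⁻¹' {m}) (E ⁻¹' {e} ∩ X ⁻¹' {x})) :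
    ∫ ω,
        ((if E ω then (1:ℝ) else 0) * fMhat (M ω) false (X ω) * (Y ω - bhat (M ω) (X ω)) /
            (fEhat (X ω) * fMhat (M ω) true (X ω)) +
          (if E ω then (0:ℝ) else 1) / (1 - fEhat (X ω)) *
            (bhat (M ω) (X ω) - etahat (X ω)) +
          etahat (X ω)) ∂μ = theta0 μ X M E Y := by
  classical
  -- atoms
  set A : Bool → 𝒮 → 𝒳 → Set Ω :=
    fun e m x => E ⁻¹' {e} ∩ M ⁻¹' {m} ∩ X ⁻¹' {x} with hA
  have hAmeas : ∀ e m x, MeasurableSet (A e m x) := fun e m x =>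
    ((hE (measurableSet_singleton e)).inter (hM (measurableSet_singleton m))).inter
      (hX (measurableSet_singleton x))
  set Z : Ω → Bool × 𝒮 × 𝒳 := fun ω => (E ω, M ω, X ω) with hZ
  have hZmeas : Measurable Z := hE.prodMk (hM.prodMk hX)
  have hZpre : ∀ e m x, Z ⁻¹' {(e, m, x)} = A e m x := by
    intro e m x; ext ω
    simp only [hZ, hA, Set.mem_preimage, Set.mem_singleton_iff, Prod.mk.injEq,
      Set.mem_inter_iff]
    tauto
  -- coefficient functions
  set g : Bool → 𝒮 → 𝒳 → ℝ :=
    fun e m x => (if e then (1:ℝ) else 0) * fMhat m false x / (fEhat x * fMhat m true x)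
    with hg
  set k : Bool → 𝒮 → 𝒳 → ℝ :=
    fun e m x => -(g e m x) * bhat m x +
      (if e then (0:ℝ) else 1) / (1 - fEhat x) * (bhat m x - etahat x) + etahat x with hk
  set F : Ω → ℝ := fun ω =>
    (if E ω then (1:ℝ) else 0) * fMhat (M ω) false (X ω) * (Y ω - bhat (M ω) (X ω)) /
        (fEhat (X ω) * fMhat (M ω) true (X ω)) +
      (if E ω then (0:ℝ) else 1) / (1 - fEhat (X ω)) *
        (bhat (M ω) (X ω) - etahat (X ω)) +
      etahat (X ω) with hF
  have hFeq : ∀ ω, F ω = g (E ω) (M ω) (X ω) * Y ω + k (E ω) (M ω) (X ω) := by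
    intro ω; simp only [hF, hg, hk]; ring
  -- integrability
  have hGmeas : ∀ G : Bool × 𝒮 × 𝒳 → ℝ, Measurable (fun ω => G (Z ω)) := fun G =>
    (measurable_of_countable G).comp hZmeas
  have hGbdd : ∀ G : Bool × 𝒮 × 𝒳 → ℝ, ∃ C, ∀ ω, ‖G (Z ω)‖ ≤ C := by
    intro G
    refine ⟨∑ p : Bool × 𝒮 × 𝒳, ‖G p‖, fun ω => ?_⟩
    exact Finset.single_le_sum (f := fun p => ‖G p‖) (fun p _ => norm_nonneg _)
      (Finset.mem_univ (Z ω))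
  have hint1 : Integrable (fun ω => g (E ω) (M ω) (X ω) * Y ω) μ := by
    have := hY.bdd_mul (hGmeas (fun p => g p.1 p.2.1 p.2.2)).aestronglyMeasurable
      (Filter.Eventually.of_forall (hGbdd (fun p => g p.1 p.2.1 p.2.2)).choose_spec)
    exact this
  have hint2 : Integrable (fun ω => k (E ω) (M ω) (X ω)) μ := by
    have := (integrable_const (μ := μ) (1:ℝ)).bdd_mul
      (hGmeas (fun p => k p.1 p.2.1 p.2.2)).aestronglyMeasurable
      (Filter.Eventually.of_forall (hGbdd (fun p => k p.1 p.2.1 p.2.2)).choose_spec)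
    simpa using this
  have hFint : Integrable F μ := by
    have := hint1.add hint2
    exact this.congr (Filter.Eventually.of_forall fun ω => (hFeq ω).symm)
  -- abbreviations for atom integrals / probabilities
  set I : Bool → 𝒮 → 𝒳 → ℝ := fun e m x => ∫ ω in A e m x, Y ω ∂μ with hI
  set P : Bool → 𝒮 → 𝒳 → ℝ := fun e m x => (μ (A e m x)).toReal with hP
  -- per-atom integral
  have hatom : ∀ e m x, ∫ ω in A e m x, F ω ∂μ = g e m x * I e m x + k e m x * P e m x := by
    intro e m x
    have h1 : Set.EqOn F (fun ω => g e m x * Y ω + k e m x) (A e m x) := by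
      intro ω hω
      obtain ⟨⟨he, hm⟩, hx⟩ := hω
      simp only [Set.mem_preimage, Set.mem_singleton_iff] at he hm hx
      rw [hFeq, he, hm, hx]
    rw [setIntegral_congr_fun (hAmeas e m x) h1,
      integral_add ((hY.restrict (s := A e m x)).const_mul _) (integrable_const _),
      integral_const_mul, setIntegral_const]
    simp [hI, hP, smul_eq_mul, mul_comm, Measure.real]
  -- partition
  have hsplit : ∫ ω, F ω ∂μ = ∑ p : Bool × 𝒮 × 𝒳, ∫ ω in Z ⁻¹' {p}, F ω ∂μ :=
    integral_partition_aux Z hZmeas F hFint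
  -- null atoms
  have hnullP : ∀ e m x, μ (X ⁻¹' {x}) = 0 → P e m x = 0 := by
    intro e m x hx
    have : μ (A e m x) = 0 :=
      le_antisymm (hx ▸ measure_mono (Set.inter_subset_right)) (zero_le)
    simp [hP, this]
  have hnullI : ∀ e m x, μ (X ⁻¹' {x}) = 0 → I e m x = 0 := by
    intro e m x hx
    have : μ (A e m x) = 0 :=
      le_antisymm (hx ▸ measure_mono (Set.inter_subset_right)) (zero_le)
    simp [hI, Measure.restrict_eq_zero.mpr this]
  -- positivity of atom measures
  have hApos : ∀ e m x, μ (X ⁻¹' {x}) ≠ 0 → μ (A e m x) ≠ 0 := by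
    intro e m x hx
    have hset : M ⁻¹' {m} ∩ E ⁻¹' {e} ∩ X ⁻¹' {x} = A e m x := by
      simp only [hA]; rw [Set.inter_comm (M ⁻¹' {m}) (E ⁻¹' {e})]
    exact hset ▸ hposM m e x hx
  have hPpos : ∀ e m x, μ (X ⁻¹' {x}) ≠ 0 → P e m x ≠ 0 := fun e m x hx =>
    ENNReal.toReal_ne_zero.mpr ⟨hApos e m x hx, measure_ne_top μ _⟩
  -- true-atom value
  have htrue : ∀ m x, g true m x * I true m x + k true m x * P true m x
      = etahat x * P true m x := by
    intro m x
    by_cases hx : μ (X ⁻¹' {x}) = 0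
    · rw [hnullP _ _ _ hx, hnullI _ _ _ hx]; ring
    · have hbeq : bhat m x = I true m x / P true m x := hb m x hx
      have hPne := hPpos true m x hx
      have hIeq : I true m x = bhat m x * P true m x := by
        rw [hbeq]; field_simp
      rw [hIeq]
      simp only [hk]
      norm_num
      ring
  -- false-atom value
  have hfalse : ∀ m x, g false m x * I false m x + k false m x * P false m x
      = ((bhat m x - etahat x) / (1 - fEhat x) + etahat x) * P false m x := by
    intro m x
    have hg0 : g false m x = 0 := by simp [hg]
    simp only [hk, hg0, Bool.false_eq_true, if_false]
    ring
  -- rewrite LHS as a double sum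
  have hLHS : ∫ ω, F ω ∂μ = ∑ x : 𝒳, ∑ m : 𝒮,
      (etahat x * P true m x
        + ((bhat m x - etahat x) / (1 - fEhat x) + etahat x) * P false m x) := by
    rw [hsplit]
    rw [Fintype.sum_prod_type]
    simp only [Fintype.sum_prod_type]
    rw [Fintype.sum_bool]
    have h1 : ∀ e m x, ∫ ω in Z ⁻¹' {(e, m, x)}, F ω ∂μ
        = g e m x * I e m x + k e m x * P e m x := by
      intro e m x; rw [hZpre, hatom]
    simp_rw [h1, htrue, hfalse]
    rw [← Finset.sum_add_distrib]
    rw [Finset.sum_comm]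
    congr 1; ext x
    rw [← Finset.sum_add_distrib]
  rw [← hF] at *
  rw [hLHS]
  -- rewrite theta0 as a full double sum
  have hθ : theta0 μ X M E Y = ∑ x : 𝒳, ∑ m : 𝒮,
      cE μ Y (E ⁻¹' {true} ∩ M ⁻¹' {m} ∩ X ⁻¹' {x}) *
        cP μ (M ⁻¹' {m}) (E ⁻¹' {false} ∩ X ⁻¹' {x}) * (μ (X ⁻¹' {x})).toReal := by
    rw [theta0, Finset.sum_comm]
    rw [Finset.sum_subset (Finset.filter_subset _ _)]
    intro x _ hx
    simp only [Finset.mem_filter, Finset.mem_univ, true_and, not_not] at hx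
    simp [hx]
  rw [hθ]
  -- per-x equality
  refine Finset.sum_congr rfl fun x _ => ?_
  by_cases hx : μ (X ⁻¹' {x}) = 0
  · simp [hnullP _ _ _ hx, hx]
  · -- positive case
    set r : Bool → ℝ := fun e => (μ (E ⁻¹' {e} ∩ X ⁻¹' {x})).toReal with hr
    have hrpos : ∀ e, r e ≠ 0 := fun e =>
      ENNReal.toReal_ne_zero.mpr ⟨hposE e x hx, measure_ne_top μ _⟩
    have hPr : ∀ e m, P e m x = fMhat m e x * r e := by
      intro e m
      have hset : M ⁻¹' {m} ∩ (E ⁻¹' {e} ∩ X ⁻¹' {x}) = A e m x := by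
        simp only [hA]; rw [← Set.inter_assoc, Set.inter_comm (M ⁻¹' {m}) (E ⁻¹' {e})]
      have hne : (μ (E ⁻¹' {e} ∩ X ⁻¹' {x})).toReal ≠ 0 := hrpos e
      have h2 := hfM m e x hx
      rw [cP, hset] at h2
      rw [hP, h2]
      simp only [hr]
      rw [div_mul_cancel₀ _ hne]
    have hrsum : r true + r false = (μ (X ⁻¹' {x})).toReal := by
      have := sum_toReal_meas_inter_aux (μ := μ) E hE (X ⁻¹' {x})
      rw [Fintype.sum_bool] at this
      exact this
    have hfE := hfE01 x
    have hfEne : (1 : ℝ) - fEhat x ≠ 0 := by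
      have := hfE.2; intro h; linarith [sub_eq_zero.mp h]
    -- RHS simplification
    have hRHS : ∀ m : 𝒮, cE μ Y (E ⁻¹' {true} ∩ M ⁻¹' {m} ∩ X ⁻¹' {x}) *
        cP μ (M ⁻¹' {m}) (E ⁻¹' {false} ∩ X ⁻¹' {x}) * (μ (X ⁻¹' {x})).toReal
        = bhat m x * fMhat m false x * (μ (X ⁻¹' {x})).toReal := by
      intro m
      rw [← hb m x hx, ← hfM m false x hx]
    simp_rw [hRHS, hPr]
    -- now pure algebra
    have key : ∀ m : 𝒮,
        etahat x * (fMhat m true x * r true)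
          + ((bhat m x - etahat x) / (1 - fEhat x) + etahat x) * (fMhat m false x * r false)
        = etahat x * r true * fMhat m true x
          + (r false / (1 - fEhat x)) * (bhat m x * fMhat m false x)
          + (etahat x * r false - etahat x * r false / (1 - fEhat x)) * fMhat m false x := by
      intro m; field_simp; ring
    simp_rw [key]
    rw [← Finset.sum_mul, Finset.sum_add_distrib, Finset.sum_add_distrib, ← Finset.mul_sum,
      ← Finset.mul_sum, ← Finset.mul_sum, hfMsum, hfMsum, ← hetahat, ← hrsum]
    field_simp
    ring
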